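/- If f: P_n^+ → ℝ is nonnegative-valued and measurable on the cone of positive definite matrices, and the Laplace transform Lf(Z) = ∫_{P_n^+} e^{-⟨Z,S⟩} f(S) dS exists for Z = Σ(μ_i + μ_j) for all pairs from a family μ_1,…,μ_k of probability measures, then for any c_1,…,c_k ∈ ℝ, Σ_{i,j} c_i c_j Lf(Σ(μ_i + μ_j)) ≥ 0; i.e. μ ↦ Lf(Σ(μ)) is a positive definite semigroup function. -/

import Mathlib

open Finset Matrix MeasureTheory

noncomputable instance {n : ℕ} : MeasureSpace (Matrix (Fin n) (Fin n) ℝ) :=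
  inferInstanceAs (MeasureSpace (Fin n → Fin n → ℝ))

noncomputable def meanVec {n : ℕ} (μ : (Fin n → ℝ) →₀ ℝ) : Fin n → ℝ :=
  fun i => ∑ p ∈ μ.support, μ p * p i

noncomputable def varMat {n : ℕ} (μ : (Fin n → ℝ) →₀ ℝ) : Matrix (Fin n) (Fin n) ℝ :=
  Matrix.of fun i j =>
    (∑ p ∈ μ.support, μ p * p i * p j) - meanVec μ i * meanVec μ j

/-- Laplace transform of a function on the cone of positive definite matrices. -/
noncomputable def laplaceT {n : ℕ} (f : Matrix (Fin n) (Fin n) ℝ → ℝ)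
    (Z : Matrix (Fin n) (Fin n) ℝ) : ℝ :=
  ∫ S in {S : Matrix (Fin n) (Fin n) ℝ | S.PosDef}, Real.exp (-(Z * S).trace) * f S

/-! ### Auxiliary lemmas -/

/-- Pull the innermost of three sums to the outside. -/
lemma sum_swap3 {ι₁ ι₂ ι₃ : Type*} (s₁ : Finset ι₁) (s₂ : Finset ι₂) (s₃ : Finset ι₃)
    (F : ι₁ → ι₂ → ι₃ → ℝ) :
    ∑ a ∈ s₁, ∑ b ∈ s₂, ∑ t ∈ s₃, F a b t = ∑ t ∈ s₃, ∑ a ∈ s₁, ∑ b ∈ s₂, F a b t :=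
  calc ∑ a ∈ s₁, ∑ b ∈ s₂, ∑ t ∈ s₃, F a b t
      = ∑ a ∈ s₁, ∑ t ∈ s₃, ∑ b ∈ s₂, F a b t :=
        Finset.sum_congr rfl fun _ _ => Finset.sum_comm
    _ = ∑ t ∈ s₃, ∑ a ∈ s₁, ∑ b ∈ s₂, F a b t := Finset.sum_comm

lemma sum_sub_sum {ι₁ ι₂ : Type*} (s₁ : Finset ι₁) (s₂ : Finset ι₂)
    (F G : ι₁ → ι₂ → ℝ) :
    ∑ a ∈ s₁, ∑ b ∈ s₂, (F a b - G a b)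
      = (∑ a ∈ s₁, ∑ b ∈ s₂, F a b) - ∑ a ∈ s₁, ∑ b ∈ s₂, G a b :=
  calc ∑ a ∈ s₁, ∑ b ∈ s₂, (F a b - G a b)
      = ∑ a ∈ s₁, (∑ b ∈ s₂, F a b - ∑ b ∈ s₂, G a b) :=
        Finset.sum_congr rfl fun _ _ => Finset.sum_sub_distrib _ _
    _ = _ := Finset.sum_sub_distrib _ _

/-- A Gram-type kernel gives a nonnegative quadratic form. -/
lemma gram_nonneg {k : ℕ} {ι : Type*} (T : Finset ι) (u : Fin k → ι → ℝ) (d : Fin k → ℝ) :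
    0 ≤ ∑ i, ∑ j, d i * d j * ∑ s ∈ T, u i s * u j s := by
  have key : ∑ s ∈ T, (∑ i, d i * u i s) ^ 2
      = ∑ i, ∑ j, d i * d j * ∑ s ∈ T, u i s * u j s := by
    simp_rw [sq, Finset.sum_mul, Finset.mul_sum]
    rw [Finset.sum_comm]
    refine Finset.sum_congr rfl fun i _ => ?_
    rw [Finset.sum_comm]
    exact Finset.sum_congr rfl fun j _ => Finset.sum_congr rfl fun s _ => by ring
  rw [← key]
  exact Finset.sum_nonneg fun s _ => sq_nonneg _

lemma pow_gram_nonneg {k N : ℕ} (w : Fin k → Fin N → ℝ) (d : Fin k → ℝ) (m : ℕ) :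
    0 ≤ ∑ i, ∑ j, d i * d j * ((∑ t, w i t * w j t) ^ m) := by
  have hpow : ∀ i j : Fin k, (∑ t, w i t * w j t) ^ m
      = ∑ p ∈ Fintype.piFinset (fun _ : Fin m => (Finset.univ : Finset (Fin N))),
          (∏ l : Fin m, w i (p l)) * ∏ l : Fin m, w j (p l) := by
    intro i j
    rw [Finset.sum_pow']
    exact Finset.sum_congr rfl fun p _ => Finset.prod_mul_distrib
  have h := gram_nonneg (Fintype.piFinset (fun _ : Fin m => (Finset.univ : Finset (Fin N))))
    (fun i p => ∏ l : Fin m, w i (p l)) d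
  refine le_of_le_of_eq h ?_
  exact Finset.sum_congr rfl fun i _ => Finset.sum_congr rfl fun j _ => by rw [hpow i j]

/-- The exponential of a Gram kernel gives a nonnegative quadratic form. -/
lemma exp_gram_nonneg {k N : ℕ} (w : Fin k → Fin N → ℝ) (d : Fin k → ℝ) :
    0 ≤ ∑ i, ∑ j, d i * d j * Real.exp (∑ t, w i t * w j t) := by
  have hexp : ∀ x : ℝ, Real.exp x = ∑' m : ℕ, x ^ m / m.factorial := by
    intro x
    rw [Real.exp_eq_exp_ℝ, NormedSpace.exp_eq_tsum_div]
  have hsum : ∀ i j : Fin k, Summable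
      (fun m : ℕ => d i * d j * ((∑ t, w i t * w j t) ^ m / m.factorial)) :=
    fun i j => (Real.summable_pow_div_factorial _).mul_left _
  have hterm : ∀ m : ℕ, 0 ≤ ∑ i, ∑ j, d i * d j * ((∑ t, w i t * w j t) ^ m / m.factorial) := by
    intro m
    have heq : ∑ i, ∑ j, d i * d j * ((∑ t, w i t * w j t) ^ m / (m.factorial : ℝ))
        = (∑ i, ∑ j, d i * d j * (∑ t, w i t * w j t) ^ m) / m.factorial := by
      simp_rw [Finset.sum_div]
      exact Finset.sum_congr rfl fun i _ => Finset.sum_congr rfl fun j _ => by ring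
    rw [heq]
    exact div_nonneg (pow_gram_nonneg w d m) (Nat.cast_nonneg _)
  have h0 : (0:ℝ) ≤ ∑' m : ℕ, ∑ i, ∑ j, d i * d j * ((∑ t, w i t * w j t) ^ m / m.factorial) :=
    tsum_nonneg hterm
  have h1 : ∑' m : ℕ, ∑ i, ∑ j, d i * d j * ((∑ t, w i t * w j t) ^ m / m.factorial)
      = ∑ i, ∑ j, ∑' m : ℕ, d i * d j * ((∑ t, w i t * w j t) ^ m / m.factorial) := by
    rw [Summable.tsum_finsetSum (fun i _ => (hasSum_sum fun j _ => (hsum i j).hasSum).summable)]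
    exact Finset.sum_congr rfl fun i _ => Summable.tsum_finsetSum (fun j _ => hsum i j)
  have h2 : ∀ i j : Fin k, (∑' m : ℕ, d i * d j * ((∑ t, w i t * w j t) ^ m / m.factorial))
      = d i * d j * Real.exp (∑ t, w i t * w j t) := by
    intro i j
    rw [tsum_mul_left, hexp]
  rw [h1] at h0
  calc (0:ℝ) ≤ _ := h0
    _ = _ := Finset.sum_congr rfl fun i _ => Finset.sum_congr rfl fun j _ => h2 i j

/-- The quadratic/bilinear form associated to a matrix. -/
noncomputable def Qform {n : ℕ} (S : Matrix (Fin n) (Fin n) ℝ) (x y : Fin n → ℝ) : ℝ :=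
  ∑ a, ∑ b, x a * y b * S b a

lemma Qform_gram {n : ℕ} {S B : Matrix (Fin n) (Fin n) ℝ} (hB : S = Bᴴ * B)
    (x y : Fin n → ℝ) :
    Qform S x y = ∑ t, (∑ a, B t a * x a) * (∑ b, B t b * y b) := by
  have hSab : ∀ b a, S b a = ∑ t, B t b * B t a := by
    intro b a
    rw [hB]
    simp [Matrix.mul_apply, Matrix.conjTranspose_apply]
  calc Qform S x y = ∑ a, ∑ b, ∑ t, x a * y b * (B t b * B t a) := by
        unfold Qform
        exact Finset.sum_congr rfl fun a _ => Finset.sum_congr rfl fun b _ => by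
          rw [hSab b a, Finset.mul_sum]
    _ = ∑ t, ∑ a, ∑ b, x a * y b * (B t b * B t a) := sum_swap3 _ _ _ _
    _ = ∑ t, (∑ a, B t a * x a) * (∑ b, B t b * y b) := by
        refine Finset.sum_congr rfl fun t _ => ?_
        rw [Finset.sum_mul]
        refine Finset.sum_congr rfl fun a _ => ?_
        rw [Finset.mul_sum]
        exact Finset.sum_congr rfl fun b _ => by ring

lemma Qform_symm {n : ℕ} {S B : Matrix (Fin n) (Fin n) ℝ} (hB : S = Bᴴ * B)
    (x y : Fin n → ℝ) : Qform S x y = Qform S y x := by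
  rw [Qform_gram hB, Qform_gram hB]
  exact Finset.sum_congr rfl fun t _ => by ring

lemma Qform_add_add {n : ℕ} (S : Matrix (Fin n) (Fin n) ℝ) (x y : Fin n → ℝ) :
    Qform S (fun a => x a + y a) (fun a => x a + y a)
      = Qform S x x + Qform S y y + Qform S x y + Qform S y x := by
  unfold Qform
  have h : ∀ a b : Fin n, (x a + y a) * (x b + y b) * S b a
      = x a * x b * S b a + y a * y b * S b a + (x a * y b * S b a + y a * x b * S b a) := by
    intro a b; ring
  calc ∑ a, ∑ b, (x a + y a) * (x b + y b) * S b a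
      = ∑ a, ∑ b, (x a * x b * S b a + y a * y b * S b a
          + (x a * y b * S b a + y a * x b * S b a)) :=
        Finset.sum_congr rfl fun a _ => Finset.sum_congr rfl fun b _ => h a b
    _ = _ := by
        simp_rw [Finset.sum_add_distrib]
        ring

/-- Additivity of weighted sums over the support of a finsupp. -/
lemma fsum_add {n : ℕ} (μ ν : (Fin n → ℝ) →₀ ℝ) (h : (Fin n → ℝ) → ℝ) :
    ∑ p ∈ (μ + ν).support, (μ + ν) p * h p
      = ∑ p ∈ μ.support, μ p * h p + ∑ p ∈ ν.support, ν p * h p := by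
  have hrw : ∀ σ : (Fin n → ℝ) →₀ ℝ,
      ∑ p ∈ σ.support, σ p * h p = σ.sum fun p a => a * h p := fun σ => rfl
  rw [hrw, hrw, hrw]
  exact Finsupp.sum_add_index' (fun p => by simp) (fun p a b => by ring)

lemma meanVec_add {n : ℕ} (μ ν : (Fin n → ℝ) →₀ ℝ) :
    meanVec (μ + ν) = fun a => meanVec μ a + meanVec ν a :=
  funext fun a => fsum_add μ ν (fun p => p a)

/-- Trace of `varMat ν * S` in terms of the quadratic form. -/
lemma trace_varMat_mul {n : ℕ} (ν : (Fin n → ℝ) →₀ ℝ) (S : Matrix (Fin n) (Fin n) ℝ) :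
    ((varMat ν) * S).trace
      = (∑ p ∈ ν.support, ν p * Qform S p p) - Qform S (meanVec ν) (meanVec ν) := by
  have h0 : ((varMat ν) * S).trace
      = ∑ a, ∑ b, ((∑ p ∈ ν.support, ν p * p a * p b) - meanVec ν a * meanVec ν b) * S b a := by
    simp [Matrix.trace, Matrix.mul_apply, varMat, Matrix.diag]
  rw [h0]
  calc ∑ a, ∑ b, ((∑ p ∈ ν.support, ν p * p a * p b) - meanVec ν a * meanVec ν b) * S b a
      = ∑ a, ∑ b, ((∑ p ∈ ν.support, ν p * (p a * p b * S b a))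
          - meanVec ν a * meanVec ν b * S b a) := by
        refine Finset.sum_congr rfl fun a _ => Finset.sum_congr rfl fun b _ => ?_
        rw [sub_mul, Finset.sum_mul]
        congr 1
        exact Finset.sum_congr rfl fun p _ => by ring
    _ = (∑ a, ∑ b, ∑ p ∈ ν.support, ν p * (p a * p b * S b a))
          - ∑ a, ∑ b, meanVec ν a * meanVec ν b * S b a := sum_sub_sum _ _ _ _
    _ = (∑ p ∈ ν.support, ν p * Qform S p p) - Qform S (meanVec ν) (meanVec ν) := by
        congr 1
        rw [sum_swap3]
        refine Finset.sum_congr rfl fun p _ => ?_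
        unfold Qform
        rw [Finset.mul_sum]
        exact Finset.sum_congr rfl fun a _ => by rw [Finset.mul_sum]

/-- The pointwise kernel positivity: for `S` positive definite. -/
lemma kernel_nonneg {n k : ℕ} (μ : Fin k → ((Fin n → ℝ) →₀ ℝ)) (c : Fin k → ℝ)
    {S : Matrix (Fin n) (Fin n) ℝ} (hS : S.PosDef) :
    0 ≤ ∑ i, ∑ j, c i * c j * Real.exp (-((varMat (μ i + μ j)) * S).trace) := by
  classical
  obtain ⟨B, hB⟩ : ∃ B : Matrix (Fin n) (Fin n) ℝ, S = Bᴴ * B := by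
    open MatrixOrder in exact CStarAlgebra.nonneg_iff_eq_star_mul_self.mp hS.posSemidef.nonneg
  set q : Fin k → ℝ := fun i => ∑ p ∈ (μ i).support, μ i p * Qform S p p with hq
  -- the trace decomposition
  have htr : ∀ i j, -((varMat (μ i + μ j)) * S).trace
      = (Qform S (meanVec (μ i)) (meanVec (μ i)) - q i)
        + (Qform S (meanVec (μ j)) (meanVec (μ j)) - q j)
        + 2 * Qform S (meanVec (μ i)) (meanVec (μ j)) := by
    intro i j
    rw [trace_varMat_mul]
    have h1 : ∑ p ∈ (μ i + μ j).support, (μ i + μ j) p * Qform S p p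
        = q i + q j := fsum_add (μ i) (μ j) _
    have h2 : Qform S (meanVec (μ i + μ j)) (meanVec (μ i + μ j))
        = Qform S (meanVec (μ i)) (meanVec (μ i)) + Qform S (meanVec (μ j)) (meanVec (μ j))
          + 2 * Qform S (meanVec (μ i)) (meanVec (μ j)) := by
      rw [meanVec_add, Qform_add_add,
        Qform_symm hB (meanVec (μ j)) (meanVec (μ i))]
      ring
    rw [h1, h2]
    ring
  -- rewrite each exponential
  set d : Fin k → ℝ :=
    fun i => c i * Real.exp (Qform S (meanVec (μ i)) (meanVec (μ i)) - q i) with hd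
  set w : Fin k → Fin n → ℝ :=
    fun i t => Real.sqrt 2 * ∑ a, B t a * meanVec (μ i) a with hw
  have h22 : Real.sqrt 2 * Real.sqrt 2 = 2 := Real.mul_self_sqrt (by norm_num)
  have hkern : ∀ i j, c i * c j * Real.exp (-((varMat (μ i + μ j)) * S).trace)
      = d i * d j * Real.exp (∑ t, w i t * w j t) := by
    intro i j
    have h2Q : ∑ t, w i t * w j t
        = 2 * Qform S (meanVec (μ i)) (meanVec (μ j)) := by
      rw [Qform_gram hB, Finset.mul_sum]
      refine Finset.sum_congr rfl fun t _ => ?_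
      calc w i t * w j t
          = (Real.sqrt 2 * Real.sqrt 2)
            * ((∑ a, B t a * meanVec (μ i) a) * ∑ b, B t b * meanVec (μ j) b) := by
            rw [hw]; ring
        _ = 2 * ((∑ a, B t a * meanVec (μ i) a) * ∑ b, B t b * meanVec (μ j) b) := by
            rw [h22]
    rw [htr i j, h2Q, Real.exp_add, Real.exp_add, hd]
    ring
  calc (0:ℝ) ≤ ∑ i, ∑ j, d i * d j * Real.exp (∑ t, w i t * w j t) := exp_gram_nonneg w d
    _ = ∑ i, ∑ j, c i * c j * Real.exp (-((varMat (μ i + μ j)) * S).trace) :=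
      Finset.sum_congr rfl fun i _ => Finset.sum_congr rfl fun j _ => (hkern i j).symm

lemma measurable_posdef_integrand {n : ℕ} (f : Matrix (Fin n) (Fin n) ℝ → ℝ)
    (hf_meas : Measurable f) (M : Matrix (Fin n) (Fin n) ℝ) :
    Measurable (fun S : Matrix (Fin n) (Fin n) ℝ =>
      Real.exp (-(M * S).trace) * f S) := by
  have htr : Measurable (fun S : Matrix (Fin n) (Fin n) ℝ => -(M * S).trace) := by
    have heq : (fun S : Matrix (Fin n) (Fin n) ℝ => -(M * S).trace)
        = fun S => -∑ a : Fin n, ∑ b : Fin n, M a b * S b a := by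
      funext S
      simp [Matrix.trace, Matrix.mul_apply, Matrix.diag]
    rw [heq]
    apply Measurable.neg
    apply Finset.measurable_sum
    intro a _
    apply Finset.measurable_sum
    intro b _
    have hmeas : Measurable (fun S : Matrix (Fin n) (Fin n) ℝ => S b a) :=
      (measurable_pi_apply (a : Fin n)).comp (measurable_pi_apply (b : Fin n))
    exact hmeas.const_mul (M a b)
  exact (Real.measurable_exp.comp htr).mul hf_meas

/-- μ ↦ Lf(Σ(μ)) is a positive definite semigroup function. -/
theorem laplace_transform_ssppd {n k : ℕ} (f : Matrix (Fin n) (Fin n) ℝ → ℝ)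
    (hf_meas : Measurable f) (hf_nonneg : ∀ S, S.PosDef → 0 ≤ f S)
    (μ : Fin k → ((Fin n → ℝ) →₀ ℝ))
    (hpos : ∀ i p, 0 ≤ μ i p) (hprob : ∀ i, ∑ p ∈ (μ i).support, μ i p = 1)
    (hint : ∀ i j, IntegrableOn
      (fun S => Real.exp (-((varMat (μ i + μ j)) * S).trace) * f S)
      {S : Matrix (Fin n) (Fin n) ℝ | S.PosDef})
    (c : Fin k → ℝ) :
    0 ≤ ∑ i, ∑ j, c i * c j * laplaceT f (varMat (μ i + μ j)) := by
  classical
  set s : Set (Matrix (Fin n) (Fin n) ℝ) := {S | S.PosDef} with hs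
  set g : Fin k → Fin k → Matrix (Fin n) (Fin n) ℝ → ℝ :=
    fun i j S => c i * c j * (Real.exp (-((varMat (μ i + μ j)) * S).trace) * f S) with hg
  have hint' : ∀ i j, IntegrableOn (g i j) s := fun i j => (hint i j).const_mul _
  have h1 : ∀ i j, c i * c j * laplaceT f (varMat (μ i + μ j)) = ∫ S in s, g i j S := by
    intro i j
    rw [laplaceT]
    exact (integral_const_mul _ _).symm
  simp_rw [h1]
  have h2 : ∀ i, ∑ j, ∫ S in s, g i j S = ∫ S in s, ∑ j, g i j S :=
    fun i => (integral_finset_sum _ (fun j _ => hint' i j)).symm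
  simp_rw [h2]
  rw [← integral_finset_sum _ (fun i _ => integrable_finset_sum _ (fun j _ => hint' i j))]
  set G : Matrix (Fin n) (Fin n) ℝ → ℝ := fun S => ∑ i, ∑ j, g i j S with hG
  have hGnonneg : ∀ S ∈ s, 0 ≤ G S := by
    intro S hSmem
    have hSpd : S.PosDef := hSmem
    have hfac : G S
        = (∑ i, ∑ j, c i * c j * Real.exp (-((varMat (μ i + μ j)) * S).trace)) * f S := by
      simp only [hG, hg, Finset.sum_mul]
      exact Finset.sum_congr rfl fun i _ => Finset.sum_congr rfl fun j _ => by ring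
    rw [hfac]
    exact mul_nonneg (kernel_nonneg μ c hSpd) (hf_nonneg S hSpd)
  have hGmeas : Measurable G := by
    apply Finset.measurable_sum
    intro i _
    apply Finset.measurable_sum
    intro j _
    exact (measurable_posdef_integrand f hf_meas _).const_mul _
  refine integral_nonneg_of_ae ?_
  have hA : MeasurableSet {S : Matrix (Fin n) (Fin n) ℝ | ¬ (0:ℝ) ≤ G S} := by
    have hset : {S : Matrix (Fin n) (Fin n) ℝ | ¬ (0:ℝ) ≤ G S} = {S | G S < 0} := by
      ext S; simp [not_le]
    rw [hset]
    exact measurableSet_lt hGmeas measurable_const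
  have hae : ∀ᵐ S ∂(volume.restrict s), (0:ℝ) ≤ G S := by
    rw [ae_iff, Measure.restrict_apply hA]
    have hempty : {S : Matrix (Fin n) (Fin n) ℝ | ¬ (0:ℝ) ≤ G S} ∩ s = ∅ := by
      ext S
      simp only [Set.mem_inter_iff, Set.mem_setOf_eq, Set.mem_empty_iff_false, iff_false]
      rintro ⟨hneg, hmem⟩
      exact hneg (hGnonneg S hmem)
    rw [hempty]
    simp
  exact hae.mono fun S hx => hx
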